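/- Let H be a Hopf algebra with antipode S, and let {h_i} be a k-basis of H. Then {Φ⁻¹(h_i ⊗ 1)} = {h_i ⊗ 1} generates H ⊗ H as a right H-module under the action F·f = F·Δ(f), and in fact H ⊗ H is a free right H-module with basis {h_i ⊗ 1}. -/

import Mathlib

open TensorProduct

/-- The right action of `H` on `H ⊗ H`: `F · f = F * Δ(f)`, using the algebra
structure of `H ⊗ H`. -/
noncomputable def rAct (k H : Type*) [Field k] [Ring H] [HopfAlgebra k H]
    (F : H ⊗[k] H) (f : H) : H ⊗[k] H :=
  F * Coalgebra.comul f


open TensorProduct Coalgebra HopfAlgebra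

set_option maxHeartbeats 1000000
set_option synthInstance.maxHeartbeats 200000

namespace TFRM

variable (k H : Type*) [Field k] [Ring H] [HopfAlgebra k H]

/-- `Φ (a ⊗ b) = a b₍₁₎ ⊗ b₍₂₎`. -/
noncomputable def Phi : H ⊗[k] H →ₗ[k] H ⊗[k] H :=
  (LinearMap.mul' k H).rTensor H ∘ₗ (TensorProduct.assoc k H H H).symm.toLinearMap ∘ₗ
    (Coalgebra.comul (R := k) (A := H)).lTensor H

/-- `Ψ (a ⊗ b) = a S(b₍₁₎) ⊗ b₍₂₎`. -/
noncomputable def Psi : H ⊗[k] H →ₗ[k] H ⊗[k] H :=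
  (LinearMap.mul' k H).rTensor H ∘ₗ (TensorProduct.assoc k H H H).symm.toLinearMap ∘ₗ
    ((antipode (R := k)).rTensor H ∘ₗ Coalgebra.comul (R := k) (A := H)).lTensor H

variable {k H}

lemma Phi_tmul {ι : Type*} (a b : H) (r : Coalgebra.Repr k b ι) :
    Phi k H (a ⊗ₜ[k] b) = ∑ i ∈ r.index, (a * r.left i) ⊗ₜ[k] r.right i := by
  simp only [Phi, LinearMap.coe_comp, LinearEquiv.coe_coe, Function.comp_apply,
    LinearMap.lTensor_tmul, ← r.eq, tmul_sum, map_sum]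
  simp

lemma Psi_tmul {ι : Type*} (a b : H) (r : Coalgebra.Repr k b ι) :
    Psi k H (a ⊗ₜ[k] b) = ∑ i ∈ r.index, (a * antipode (R := k) (r.left i)) ⊗ₜ[k] r.right i := by
  simp only [Psi, LinearMap.coe_comp, LinearEquiv.coe_coe, Function.comp_apply,
    LinearMap.lTensor_tmul, ← r.eq, map_sum, tmul_sum]
  simp

lemma eps_sum {ι : Type*} (a b : H) (r : Coalgebra.Repr k b ι) :
    ∑ i ∈ r.index, (counit (R := k) (r.left i)) • (a ⊗ₜ[k] r.right i) = a ⊗ₜ[k] b := by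
  have h := Coalgebra.sum_counit_tmul_eq (R := k) r
  have h2 := congrArg ((TensorProduct.mk k H H a) ∘ₗ (TensorProduct.lid k H).toLinearMap) h
  simp only [map_sum, LinearMap.coe_comp, LinearEquiv.coe_coe, Function.comp_apply,
    lid_tmul, mk_apply, one_smul] at h2
  simpa [tmul_smul] using h2

end TFRM

namespace TFRM

variable {k H : Type*} [Field k] [Ring H] [HopfAlgebra k H]

variable (k H) in
noncomputable def Tmap (a : H) : H ⊗[k] (H ⊗[k] H) →ₗ[k] H ⊗[k] H :=
  (LinearMap.mul' k H).rTensor H ∘ₗ (TensorProduct.assoc k H H H).symm.toLinearMap ∘ₗ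
    ((antipode (R := k)).rTensor H).lTensor H ∘ₗ (LinearMap.mulLeft k a).rTensor (H ⊗[k] H)

lemma Tmap_tmul (a u v w : H) :
    Tmap k H a (u ⊗ₜ[k] (v ⊗ₜ[k] w)) = (a * u * antipode (R := k) v) ⊗ₜ[k] w := by
  simp [Tmap]

variable (k H) in
noncomputable def T2map (a : H) : H ⊗[k] (H ⊗[k] H) →ₗ[k] H ⊗[k] H :=
  (LinearMap.mul' k H).rTensor H ∘ₗ (TensorProduct.assoc k H H H).symm.toLinearMap ∘ₗ
    ((LinearMap.mulLeft k a ∘ₗ antipode (R := k)).rTensor (H ⊗[k] H))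

lemma T2map_tmul (a u v w : H) :
    T2map k H a (u ⊗ₜ[k] (v ⊗ₜ[k] w)) = (a * antipode (R := k) u * v) ⊗ₜ[k] w := by
  simp [T2map]

lemma Psi_Phi (a b : H) : Psi k H (Phi k H (a ⊗ₜ[k] b)) = a ⊗ₜ[k] b := by
  set r := ℛ k b with hr
  rw [Phi_tmul a b r, map_sum]
  set a₁ : (i : H × H) → Coalgebra.Repr k (r.left i) (H × H) := fun i => ℛ k (r.left i) with ha₁
  set a₂ : (i : H × H) → Coalgebra.Repr k (r.right i) (H × H) := fun i => ℛ k (r.right i) with ha₂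
  have key := Coalgebra.sum_tmul_tmul_eq r a₁ a₂
  have key2 := congrArg (Tmap k H a) key
  simp only [map_sum, Tmap_tmul] at key2
  calc ∑ i ∈ r.index, Psi k H ((a * r.left i) ⊗ₜ[k] r.right i)
      = ∑ i ∈ r.index, ∑ j ∈ (a₂ i).index,
          (a * r.left i * antipode (R := k) ((a₂ i).left j)) ⊗ₜ[k] (a₂ i).right j := by
        exact Finset.sum_congr rfl fun i _ => Psi_tmul _ _ (a₂ i)
    _ = ∑ i ∈ r.index, ∑ j ∈ (a₁ i).index,
          (a * (a₁ i).left j * antipode (R := k) ((a₁ i).right j)) ⊗ₜ[k] r.right i := key2.symm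
    _ = ∑ i ∈ r.index, (counit (R := k) (r.left i)) • (a ⊗ₜ[k] r.right i) := by
        refine Finset.sum_congr rfl fun i _ => ?_
        have h : ∑ j ∈ (a₁ i).index,
            (a * (a₁ i).left j * antipode (R := k) ((a₁ i).right j)) =
            counit (R := k) (r.left i) • a := by
          simp_rw [mul_assoc]
          rw [← Finset.mul_sum, HopfAlgebra.sum_mul_antipode_eq_smul (a₁ i),
            mul_smul_comm, mul_one]
        rw [← TensorProduct.sum_tmul, h, TensorProduct.smul_tmul']
    _ = a ⊗ₜ[k] b := eps_sum a b r

lemma Phi_Psi (a b : H) : Phi k H (Psi k H (a ⊗ₜ[k] b)) = a ⊗ₜ[k] b := by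
  set r := ℛ k b with hr
  rw [Psi_tmul a b r, map_sum]
  set a₁ : (i : H × H) → Coalgebra.Repr k (r.left i) (H × H) := fun i => ℛ k (r.left i) with ha₁
  set a₂ : (i : H × H) → Coalgebra.Repr k (r.right i) (H × H) := fun i => ℛ k (r.right i) with ha₂
  have key := Coalgebra.sum_tmul_tmul_eq r a₁ a₂
  have key2 := congrArg (T2map k H a) key
  simp only [map_sum, T2map_tmul] at key2
  calc ∑ i ∈ r.index, Phi k H ((a * antipode (R := k) (r.left i)) ⊗ₜ[k] r.right i)
      = ∑ i ∈ r.index, ∑ j ∈ (a₂ i).index,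
          (a * antipode (R := k) (r.left i) * (a₂ i).left j) ⊗ₜ[k] (a₂ i).right j := by
        exact Finset.sum_congr rfl fun i _ => Phi_tmul _ _ (a₂ i)
    _ = ∑ i ∈ r.index, ∑ j ∈ (a₁ i).index,
          (a * antipode (R := k) ((a₁ i).left j) * (a₁ i).right j) ⊗ₜ[k] r.right i := key2.symm
    _ = ∑ i ∈ r.index, (counit (R := k) (r.left i)) • (a ⊗ₜ[k] r.right i) := by
        refine Finset.sum_congr rfl fun i _ => ?_
        have h : ∑ j ∈ (a₁ i).index,
            (a * antipode (R := k) ((a₁ i).left j) * (a₁ i).right j) =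
            counit (R := k) (r.left i) • a := by
          simp_rw [mul_assoc]
          rw [← Finset.mul_sum, HopfAlgebra.sum_antipode_mul_eq_smul (a₁ i),
            mul_smul_comm, mul_one]
        rw [← TensorProduct.sum_tmul, h, TensorProduct.smul_tmul']
    _ = a ⊗ₜ[k] b := eps_sum a b r

end TFRM

namespace TFRM

variable {k H ι : Type*} [Field k] [Ring H] [HopfAlgebra k H]

variable (k H) in
/-- `Phi` as a linear equivalence, with inverse `Psi`. -/
noncomputable def PhiEquiv : H ⊗[k] H ≃ₗ[k] H ⊗[k] H :=
  LinearEquiv.ofLinear (Phi k H) (Psi k H)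
    (TensorProduct.ext' fun a b => Phi_Psi a b)
    (TensorProduct.ext' fun a b => Psi_Phi a b)

lemma rAct_eq (a f : H) : rAct k H (a ⊗ₜ[k] (1 : H)) f = Phi k H (a ⊗ₜ[k] f) := by
  set r := ℛ k f
  rw [rAct, Phi_tmul a f r, ← r.eq, Finset.mul_sum]
  exact Finset.sum_congr rfl fun i _ => by
    rw [Algebra.TensorProduct.tmul_mul_tmul, one_mul]

variable (b : Module.Basis ι k H)

/-- The map `(ι →₀ H) → H ⊗ H`, `c ↦ ∑ bᵢ ⊗ cᵢ`. -/
noncomputable def Gmap : (ι →₀ H) →ₗ[k] H ⊗[k] H :=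
  Finsupp.lsum k fun i => TensorProduct.mk k H H (b i)

lemma Gmap_apply (c : ι →₀ H) : Gmap b c = c.sum fun i f => b i ⊗ₜ[k] f := by
  simp [Gmap, Finsupp.sum]

lemma Gmap_bijective : Function.Bijective (Gmap b) := by
  letI := Classical.decEq ι
  have he : Gmap b =
      (((TensorProduct.congr b.repr (LinearEquiv.refl k H)).trans
        (TensorProduct.finsuppScalarLeft k H ι)).symm : (ι →₀ H) ≃ₗ[k] H ⊗[k] H) := by
    refine Finsupp.lhom_ext fun i f => ?_
    simp [Gmap, LinearEquiv.trans_symm, LinearEquiv.trans_apply,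
      TensorProduct.finsuppScalarLeft_symm_apply_single, TensorProduct.congr_symm_tmul,
      Module.Basis.repr_symm_single_one]
  rw [he]
  exact LinearEquiv.bijective _

end TFRM


/-- If `{hᵢ}` is a `k`-basis of a Hopf algebra `H`, then `{hᵢ ⊗ 1}` is a basis of
`H ⊗ H` as a right `H`-module under `F · f = F·Δ(f)`: every element of `H ⊗ H`
is uniquely a finite sum `Σ (hᵢ ⊗ 1)·fᵢ` with `fᵢ ∈ H`. -/
theorem tensor_free_right_module (k H ι : Type*) [Field k] [Ring H] [HopfAlgebra k H]
    (b : Module.Basis ι k H) (y : H ⊗[k] H) :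
    ∃! c : ι →₀ H, y = c.sum fun i f => rAct k H (b i ⊗ₜ[k] (1 : H)) f := by
  have hre : ∀ c : ι →₀ H, (c.sum fun i f => rAct k H (b i ⊗ₜ[k] (1 : H)) f)
      = TFRM.Phi k H (TFRM.Gmap b c) := by
    intro c
    rw [TFRM.Gmap_apply, map_finsuppSum]
    exact Finsupp.sum_congr fun i _ => TFRM.rAct_eq (b i) _
  have hbij : Function.Bijective fun c : ι →₀ H => TFRM.Phi k H (TFRM.Gmap b c) := by
    have : (fun c : ι →₀ H => TFRM.Phi k H (TFRM.Gmap b c))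
        = (TFRM.PhiEquiv k H) ∘ (TFRM.Gmap b) := rfl
    rw [this]
    exact (TFRM.PhiEquiv k H).bijective.comp (TFRM.Gmap_bijective b)
  obtain ⟨c, hc⟩ := hbij.2 y
  have hc' : TFRM.Phi k H (TFRM.Gmap b c) = y := hc
  refine ⟨c, ?_, fun d hd => hbij.1 ?_⟩
  · show y = c.sum fun i f => rAct k H (b i ⊗ₜ[k] (1 : H)) f
    rw [hre c]; exact hc'.symm
  · show TFRM.Phi k H (TFRM.Gmap b d) = TFRM.Phi k H (TFRM.Gmap b c)
    have hd' : y = d.sum fun i f => rAct k H (b i ⊗ₜ[k] (1 : H)) f := hd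
    rw [← hre d, ← hd', hc']
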